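/- arXiv:2310.20397 — 3 statements merged into one kernel-verified Lean document; each statement's English description precedes it below -/
import Mathlib

section
/- Let each T'_j be Borel measurable and let μ ∈ 𝒫₂(E). Then the Wasserstein distance between μ and its one-step image under the Markov operator is controlled by the fixed-point residual of T_1: d_{W2,p}(μ𝒫, μ)² ≤ ∫ ‖x − T_1 x‖² dμ(x), where T_1 x = (T'_1(x),…,T'_m(x)) is the map using all blocks. If, in addition, C := {x ∈ E : T_i x = x for every i with η_i > 0} is nonempty and every invariant measure in 𝒫₂(E) has support contained in C, then Ψ(μ) = (∫ ‖x − T_1 x‖² dμ(x))^{1/2}, and consequently Ψ(μ) ≥ d_{W2,p}(μ𝒫, μ). -/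
open Finset MeasureTheory Filter
open scoped RealInnerProductSpace

set_option linter.unusedSectionVars false
set_option maxHeartbeats 1000000

noncomputable section

variable {m : ℕ} {I : Type*} [Fintype I]
variable {E : Fin m → Type*} [∀ j, NormedAddCommGroup (E j)]
  [∀ j, InnerProductSpace ℝ (E j)] [∀ j, FiniteDimensional ℝ (E j)]
variable [∀ j, MeasurableSpace (E j)] [∀ j, BorelSpace (E j)]
variable [MeasurableSpace (PiLp 2 E)] [BorelSpace (PiLp 2 E)]

/-- The blockwise map `T_i`: applies `T'_j` on the blocks `j ∈ M i`, identity elsewhere. -/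
def blockMap (M : I → Finset (Fin m)) (T' : ∀ j, PiLp 2 E → E j)
    (i : I) (x : PiLp 2 E) : PiLp 2 E :=
  WithLp.toLp 2 (fun j => if j ∈ M i then T' j x else x j)

/-- The squared weighted norm `‖z‖_p²  =  ∑ⱼ pⱼ⁻¹ ‖zⱼ‖²`. -/
def wNormSq (pw : Fin m → ℝ) (z : PiLp 2 E) : ℝ :=
  ∑ j, (pw j)⁻¹ * ‖z j‖ ^ 2

/-- The weighted norm `‖z‖_p`. -/
def wNorm (pw : Fin m → ℝ) (z : PiLp 2 E) : ℝ :=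
  Real.sqrt (wNormSq pw z)

/-- `γ` is a coupling of `μ` and `ν`. -/
def IsCoupling (γ : Measure (PiLp 2 E × PiLp 2 E)) (μ ν : Measure (PiLp 2 E)) : Prop :=
  IsProbabilityMeasure γ ∧ γ.map Prod.fst = μ ∧ γ.map Prod.snd = ν

/-- The transport cost `(∫ ‖x−y‖_p² dγ)^{1/2}` of a coupling `γ`. -/
def couplingCost (pw : Fin m → ℝ) (γ : Measure (PiLp 2 E × PiLp 2 E)) : ℝ :=
  Real.sqrt (∫ z, wNormSq pw (z.1 - z.2) ∂γ)

/-- The weighted Wasserstein-2 distance `d_{W2,p}`. -/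
def W2 (pw : Fin m → ℝ) (μ ν : Measure (PiLp 2 E)) : ℝ :=
  sInf {r | ∃ γ, IsCoupling γ μ ν ∧ r = couplingCost pw γ}

/-- `γ` is an optimal coupling of `(μ, ν)` w.r.t. `d_{W2,p}`. -/
def IsOptimalCoupling (pw : Fin m → ℝ) (γ : Measure (PiLp 2 E × PiLp 2 E))
    (μ ν : Measure (PiLp 2 E)) : Prop :=
  IsCoupling γ μ ν ∧ couplingCost pw γ = W2 pw μ ν

/-- The Markov operator `μ ↦ μ𝒫 = ∑ᵢ ηᵢ (Tᵢ)_* μ`. -/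
def markovOp (η : I → ℝ) (T : I → PiLp 2 E → PiLp 2 E)
    (μ : Measure (PiLp 2 E)) : Measure (PiLp 2 E) :=
  ∑ i : I, (ENNReal.ofReal (η i)) • μ.map (T i)

/-- `μ ∈ 𝒫₂(G)` : Borel probability measure concentrated on `G` with finite second moment. -/
def MemP2 (G : Set (PiLp 2 E)) (μ : Measure (PiLp 2 E)) : Prop :=
  IsProbabilityMeasure μ ∧ μ Gᶜ = 0 ∧ Integrable (fun x => ‖x‖ ^ 2) μ

/-- `d_{W2,p}(μ, inv𝒫)` : distance from `μ` to the invariant measures in `𝒫₂(G)`. -/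
def dInv (pw : Fin m → ℝ) (η : I → ℝ) (T : I → PiLp 2 E → PiLp 2 E)
    (G : Set (PiLp 2 E)) (μ : Measure (PiLp 2 E)) : ℝ :=
  sInf {r | ∃ π, markovOp η T π = π ∧ MemP2 G π ∧ r = W2 pw μ π}

/-- The expected weighted transport discrepancy `∑ᵢ ηᵢ ψ_p(x, y, Tᵢx, Tᵢy)`. -/
def discrep (pw : Fin m → ℝ) (η : I → ℝ) (T : I → PiLp 2 E → PiLp 2 E)
    (z : PiLp 2 E × PiLp 2 E) : ℝ :=
  ∑ i : I, η i * wNormSq pw ((z.1 - T i z.1) - (z.2 - T i z.2))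

/-- The invariant Markov transport discrepancy `Ψ`. -/
def Psi (pw : Fin m → ℝ) (η : I → ℝ) (T : I → PiLp 2 E → PiLp 2 E)
    (G : Set (PiLp 2 E)) (μ : Measure (PiLp 2 E)) : ℝ :=
  sInf {r | ∃ π γ, markovOp η T π = π ∧ MemP2 G π ∧ IsOptimalCoupling pw γ μ π ∧
    r = Real.sqrt (∫ z, discrep pw η T z ∂γ)}


/-- homeomorph to pi -/
def piLpHomeo : PiLp 2 E ≃ₜ (∀ j, E j) :=
  { WithLp.equiv 2 (∀ j, E j) with
    continuous_toFun := PiLp.continuous_ofLp 2 E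
    continuous_invFun := PiLp.continuous_toLp 2 E }

def piLpMeasEquiv : PiLp 2 E ≃ᵐ (∀ j, E j) := (piLpHomeo (E := E)).toMeasurableEquiv

lemma measurable_eval_piLp (j : Fin m) : Measurable (fun x : PiLp 2 E => x j) :=
  (measurable_pi_apply j).comp (piLpMeasEquiv (E := E)).measurable

lemma measurable_into_piLp {α : Type*} [MeasurableSpace α] {g : α → PiLp 2 E}
    (h : ∀ j, Measurable fun a => g a j) : Measurable g := by
  have h1 : Measurable fun a => (piLpMeasEquiv (E := E)) (g a) := measurable_pi_iff.2 h
  have h2 := (piLpMeasEquiv (E := E)).symm.measurable.comp h1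
  simpa [piLpMeasEquiv, piLpHomeo, Function.comp_def] using h2

lemma measurable_blockMap (M : I → Finset (Fin m)) (T' : ∀ j, PiLp 2 E → E j)
    (hmeas : ∀ j, Measurable (T' j)) (i : I) : Measurable (blockMap M T' i) := by
  apply measurable_into_piLp
  intro j
  simp only [blockMap]
  by_cases h : j ∈ M i <;> simp [h, hmeas j, measurable_eval_piLp j]

lemma continuous_wNormSq (pw : Fin m → ℝ) : Continuous (wNormSq (E := E) pw) := by
  unfold wNormSq
  refine continuous_finset_sum _ fun j _ => ?_
  have hj : Continuous fun z : PiLp 2 E => z j :=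
    (continuous_apply j).comp (piLpHomeo (E := E)).continuous
  exact continuous_const.mul ((hj.norm).pow 2)

lemma wNormSq_nonneg (pw : Fin m → ℝ) (hp : ∀ j, 0 < pw j) (z : PiLp 2 E) :
    0 ≤ wNormSq pw z :=
  Finset.sum_nonneg fun j _ => mul_nonneg (inv_nonneg.2 (hp j).le) (by positivity)

lemma blockMap_sub_apply (M : I → Finset (Fin m)) (T' : ∀ j, PiLp 2 E → E j)
    (i : I) (x : PiLp 2 E) (j : Fin m) :
    (x - blockMap M T' i x) j = if j ∈ M i then x j - T' j x else 0 := by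
  have hx : (x - blockMap M T' i x) j = x j - blockMap M T' i x j := rfl
  rw [hx]
  simp only [blockMap]
  split_ifs <;> simp

lemma wNormSq_neg (pw : Fin m → ℝ) (z : PiLp 2 E) : wNormSq pw (-z) = wNormSq pw z := by
  unfold wNormSq
  refine Finset.sum_congr rfl fun j _ => ?_
  have hz : (-z) j = -(z j) := rfl
  rw [hz, norm_neg]

/-- Key pointwise identity. -/
lemma key_identity (M : I → Finset (Fin m)) (i₁ : I) (hi₁ : M i₁ = Finset.univ)
    (η : I → ℝ) (pw : Fin m → ℝ) (hpw : ∀ j, pw j = ∑ i : I, if j ∈ M i then η i else 0)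
    (hp : ∀ j, 0 < pw j) (T' : ∀ j, PiLp 2 E → E j) (x : PiLp 2 E) :
    ∑ i : I, η i * wNormSq pw (x - blockMap M T' i x)
      = ‖x - blockMap M T' i₁ x‖ ^ 2 := by
  rw [PiLp.norm_sq_eq_of_L2]
  simp only [wNormSq, Finset.mul_sum]
  rw [Finset.sum_comm]
  refine Finset.sum_congr rfl fun j _ => ?_
  have h1 : ∀ i : I, η i * ((pw j)⁻¹ * ‖(x - blockMap M T' i x) j‖ ^ 2)
      = (if j ∈ M i then η i else 0) * ((pw j)⁻¹ * ‖x j - T' j x‖ ^ 2) := by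
    intro i
    rw [blockMap_sub_apply]
    split_ifs <;> simp
  have h2 : (x - blockMap M T' i₁ x) j = x j - T' j x := by
    rw [blockMap_sub_apply]; simp [hi₁]
  rw [h2]
  calc ∑ i : I, η i * ((pw j)⁻¹ * ‖(x - blockMap M T' i x) j‖ ^ 2)
      = (∑ i : I, if j ∈ M i then η i else 0) * ((pw j)⁻¹ * ‖x j - T' j x‖ ^ 2) := by
        rw [Finset.sum_mul]; exact Finset.sum_congr rfl fun i _ => h1 i
    _ = ‖x j - T' j x‖ ^ 2 := by
        rw [← hpw j, ← mul_assoc, mul_inv_cancel₀ (hp j).ne', one_mul]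

/-- the Wasserstein distance between `μ` and `μ𝒫` is controlled by the fixed-point
residual of `T₁`; in the consistent case `Ψ(μ)` equals the root-mean-square residual, hence
dominates `d_{W2,p}(μ𝒫, μ)`. -/
theorem statement14
    (M : I → Finset (Fin m)) (hM : ∀ i, (M i).Nonempty)
    (i₁ : I) (hi₁ : M i₁ = Finset.univ)
    (η : I → ℝ) (hη : ∀ i, 0 ≤ η i) (hηsum : ∑ i : I, η i = 1)
    (pw : Fin m → ℝ) (hpw : ∀ j, pw j = ∑ i : I, if j ∈ M i then η i else 0)
    (hp : ∀ j, 0 < pw j)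
    (T' : ∀ j, PiLp 2 E → E j) (hmeas : ∀ j, Measurable (T' j))
    (C : Set (PiLp 2 E))
    (hC : C = {x : PiLp 2 E | ∀ i, 0 < η i → blockMap M T' i x = x})
    (μ : Measure (PiLp 2 E)) (hμ : MemP2 Set.univ μ) :
    (W2 pw (markovOp η (blockMap M T') μ) μ) ^ 2
      ≤ ∫ x, ‖x - blockMap M T' i₁ x‖ ^ 2 ∂μ
    ∧ (C.Nonempty →
        (∀ π : Measure (PiLp 2 E), markovOp η (blockMap M T') π = π →
          MemP2 Set.univ π → π Cᶜ = 0) →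
        Psi pw η (blockMap M T') Set.univ μ
            = Real.sqrt (∫ x, ‖x - blockMap M T' i₁ x‖ ^ 2 ∂μ)
          ∧ W2 pw (markovOp η (blockMap M T') μ) μ
              ≤ Psi pw η (blockMap M T') Set.univ μ) := by
  classical
  obtain ⟨hμprob, -, -⟩ := hμ
  set T := blockMap M T' with hTdef
  have hTm : ∀ i, Measurable (T i) := measurable_blockMap M T' hmeas
  set G : PiLp 2 E → ℝ := fun x => ‖x - T i₁ x‖ ^ 2 with hGdef
  have hsubm : ∀ i, Measurable fun x : PiLp 2 E => x - T i x := fun i =>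
    measurable_into_piLp fun j =>
      (measurable_eval_piLp j).sub ((measurable_eval_piLp j).comp (hTm i))
  have hGm : Measurable G := (hsubm i₁).norm.pow_const 2
  have hGnn : ∀ x, 0 ≤ G x := fun x => by positivity
  have hGint_nn : 0 ≤ ∫ x, G x ∂μ := integral_nonneg hGnn
  set F : PiLp 2 E × PiLp 2 E → ℝ := fun z => wNormSq pw (z.1 - z.2) with hFdef
  have hFm : Measurable F :=
    (continuous_wNormSq pw).measurable.comp (measurable_into_piLp fun j =>
      ((measurable_eval_piLp j).comp measurable_fst).sub
        ((measurable_eval_piLp j).comp measurable_snd))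
  have hFnn : ∀ z, 0 ≤ F z := fun z => wNormSq_nonneg pw hp _
  have hkey : ∀ x, ∑ i : I, η i * wNormSq pw (x - T i x) = G x :=
    key_identity M i₁ hi₁ η pw hpw hp T'
  -- the coupling for part 1
  set γ₀ : Measure (PiLp 2 E × PiLp 2 E) :=
    ∑ i : I, ENNReal.ofReal (η i) • μ.map (fun x => (T i x, x)) with hγ₀
  have hpairm : ∀ i, Measurable fun x : PiLp 2 E => (T i x, x) := fun i =>
    (hTm i).prodMk measurable_id
  have hγ₀prob : IsProbabilityMeasure γ₀ := by
    constructor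
    rw [hγ₀, Measure.finset_sum_apply]
    have : ∀ i : I, (ENNReal.ofReal (η i) • μ.map (fun x => (T i x, x))) Set.univ
        = ENNReal.ofReal (η i) := by
      intro i
      rw [Measure.smul_apply, Measure.map_apply (hpairm i) MeasurableSet.univ]
      simp
    rw [Finset.sum_congr rfl fun i _ => this i,
      ← ENNReal.ofReal_sum_of_nonneg (fun i _ => hη i), hηsum, ENNReal.ofReal_one]
  have hγ₀fst : γ₀.map Prod.fst = markovOp η T μ := by
    ext s hs
    rw [Measure.map_apply measurable_fst hs, hγ₀, Measure.finset_sum_apply,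
      markovOp, Measure.finset_sum_apply]
    refine Finset.sum_congr rfl fun i _ => ?_
    rw [Measure.smul_apply, Measure.smul_apply,
      Measure.map_apply (hpairm i) (measurable_fst hs),
      Measure.map_apply (hTm i) hs]
    rfl
  have hγ₀snd : γ₀.map Prod.snd = μ := by
    ext s hs
    rw [Measure.map_apply measurable_snd hs, hγ₀, Measure.finset_sum_apply]
    have : ∀ i : I, (ENNReal.ofReal (η i) • μ.map (fun x => (T i x, x)))
        (Prod.snd ⁻¹' s) = ENNReal.ofReal (η i) * μ s := by
      intro i
      rw [Measure.smul_apply, Measure.map_apply (hpairm i) (measurable_snd hs)]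
      rfl
    rw [Finset.sum_congr rfl fun i _ => this i, ← Finset.sum_mul,
      ← ENNReal.ofReal_sum_of_nonneg (fun i _ => hη i), hηsum, ENNReal.ofReal_one, one_mul]
  have hγ₀coup : IsCoupling γ₀ (markovOp η T μ) μ := ⟨hγ₀prob, hγ₀fst, hγ₀snd⟩
  -- cost computation for γ₀
  have hcost : ∫ z, F z ∂γ₀ = ∫ x, G x ∂μ := by
    rw [integral_eq_lintegral_of_nonneg_ae (Filter.Eventually.of_forall hFnn)
        hFm.aestronglyMeasurable,
      integral_eq_lintegral_of_nonneg_ae (Filter.Eventually.of_forall hGnn)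
        hGm.aestronglyMeasurable]
    congr 1
    rw [hγ₀, lintegral_finset_sum_measure]
    have h1 : ∀ i : I, ∫⁻ z, ENNReal.ofReal (F z)
          ∂(ENNReal.ofReal (η i) • μ.map (fun x => (T i x, x)))
        = ∫⁻ x, ENNReal.ofReal (η i * wNormSq pw (x - T i x)) ∂μ := by
      intro i
      rw [lintegral_smul_measure, lintegral_map hFm.ennreal_ofReal (hpairm i), smul_eq_mul,
        ← lintegral_const_mul' _ _ ENNReal.ofReal_ne_top]
      refine lintegral_congr fun x => ?_
      rw [← ENNReal.ofReal_mul (hη i)]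
      congr 1
      have : F (T i x, x) = wNormSq pw (x - T i x) := by
        show wNormSq pw (T i x - x) = _
        rw [← wNormSq_neg pw (T i x - x), neg_sub]
      rw [this]
    rw [Finset.sum_congr rfl fun i _ => h1 i, ← lintegral_finset_sum]
    · refine lintegral_congr fun x => ?_
      rw [← ENNReal.ofReal_sum_of_nonneg (fun i _ =>
        mul_nonneg (hη i) (wNormSq_nonneg pw hp _)), hkey x]
    · intro i _
      exact (measurable_const.mul
        ((continuous_wNormSq pw).measurable.comp (hsubm i))).ennreal_ofReal
  have hcost' : couplingCost pw γ₀ = Real.sqrt (∫ x, G x ∂μ) := by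
    rw [couplingCost]
    exact congrArg Real.sqrt hcost
  -- W2 inequality
  set S1 := {r | ∃ γ, IsCoupling γ (markovOp η T μ) μ ∧ r = couplingCost pw γ} with hS1
  have hmem1 : couplingCost pw γ₀ ∈ S1 := ⟨γ₀, hγ₀coup, rfl⟩
  have hbdd1 : BddBelow S1 := ⟨0, fun r hr => by
    obtain ⟨γ, _, rfl⟩ := hr; exact Real.sqrt_nonneg _⟩
  have hW2le : W2 pw (markovOp η T μ) μ ≤ couplingCost pw γ₀ := csInf_le hbdd1 hmem1
  have hW2nn : 0 ≤ W2 pw (markovOp η T μ) μ :=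
    le_csInf ⟨_, hmem1⟩ fun r hr => by obtain ⟨γ, _, rfl⟩ := hr; exact Real.sqrt_nonneg _
  have part1 : (W2 pw (markovOp η T μ) μ) ^ 2 ≤ ∫ x, G x ∂μ := by
    calc (W2 pw (markovOp η T μ) μ) ^ 2 ≤ (couplingCost pw γ₀) ^ 2 := by
          exact pow_le_pow_left₀ hW2nn hW2le 2
      _ = ∫ x, G x ∂μ := by rw [hcost', Real.sq_sqrt hGint_nn]
  refine ⟨part1, fun hCne hsupp => ?_⟩
  -- Part 2
  obtain ⟨c, hcC⟩ := hCne
  have hcfix : ∀ i, 0 < η i → T i c = c := by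
    rw [hC] at hcC; exact hcC
  have hCmeas : MeasurableSet C := by
    have : C = ⋂ i : I, {x : PiLp 2 E | 0 < η i → T i x = x} := by
      rw [hC]; ext x; simp [Set.mem_iInter]
    rw [this]
    refine MeasurableSet.iInter fun i => ?_
    by_cases h : 0 < η i
    · have : {x : PiLp 2 E | 0 < η i → T i x = x} = {x | T i x = x} := by
        ext x; simp [h]
      rw [this]
      exact measurableSet_eq_fun (hTm i) measurable_id
    · have : {x : PiLp 2 E | 0 < η i → T i x = x} = Set.univ := by
        ext x; simp [h]
      rw [this]; exact MeasurableSet.univ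
  -- key: for any π supported on C and coupling γ of (μ, π), ∫ discrep dγ = ∫ G dμ
  have hdisc : ∀ (π : Measure (PiLp 2 E)), π Cᶜ = 0 →
      ∀ (γ : Measure (PiLp 2 E × PiLp 2 E)), IsCoupling γ μ π →
      ∫ z, discrep pw η T z ∂γ = ∫ x, G x ∂μ := by
    intro π hπC γ ⟨hγprob, hγfst, hγsnd⟩
    have hae : ∀ᵐ z ∂γ, z.2 ∈ C := by
      rw [ae_iff]
      have : {z : PiLp 2 E × PiLp 2 E | ¬ z.2 ∈ C} = Prod.snd ⁻¹' Cᶜ := rfl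
      rw [this, ← Measure.map_apply measurable_snd hCmeas.compl, hγsnd, hπC]
    have heq : ∀ᵐ z ∂γ, discrep pw η T z = G z.1 := by
      filter_upwards [hae] with z hz
      rw [discrep]
      have : ∀ i : I, η i * wNormSq pw ((z.1 - T i z.1) - (z.2 - T i z.2))
          = η i * wNormSq pw (z.1 - T i z.1) := by
        intro i
        rcases (hη i).eq_or_lt with h | h
        · rw [← h, zero_mul, zero_mul]
        · have : T i z.2 = z.2 := by rw [hC] at hz; exact hz i h
          rw [this, sub_self, sub_zero]
      rw [Finset.sum_congr rfl fun i _ => this i, hkey z.1]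
    rw [integral_congr_ae heq, ← hγfst,
      integral_map measurable_fst.aemeasurable]
    rw [hγfst]
    exact hGm.aestronglyMeasurable
  -- the dirac invariant measure
  set π₀ : Measure (PiLp 2 E) := Measure.dirac c with hπ₀
  have hπ₀prob : IsProbabilityMeasure π₀ := by rw [hπ₀]; infer_instance
  have hπ₀inv : markovOp η T π₀ = π₀ := by
    rw [markovOp]
    have : ∀ i : I, ENNReal.ofReal (η i) • π₀.map (T i)
        = ENNReal.ofReal (η i) • π₀ := by
      intro i
      rcases (hη i).eq_or_lt with h | h
      · rw [← h]; simp
      · rw [hπ₀, Measure.map_dirac' (hTm i), hcfix i h]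
    rw [Finset.sum_congr rfl fun i _ => this i, ← Finset.sum_smul,
      ← ENNReal.ofReal_sum_of_nonneg (fun i _ => hη i), hηsum, ENNReal.ofReal_one, one_smul]
  have hπ₀P2 : MemP2 Set.univ π₀ := by
    refine ⟨hπ₀prob, by simp, ?_⟩
    constructor
    · exact (measurable_norm.pow_const 2).aestronglyMeasurable
    · rw [hπ₀]
      simp only [HasFiniteIntegral]
      rw [lintegral_dirac]
      exact ENNReal.coe_lt_top
  have hπ₀C : π₀ Cᶜ = 0 := by
    rw [hπ₀, Measure.dirac_apply' _ hCmeas.compl]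
    simp [hcC]
  -- every coupling of (μ, π₀) has the same cost
  set v : ℝ := Real.sqrt (∫ x, wNormSq pw (x - c) ∂μ) with hv
  have hcostall : ∀ γ : Measure (PiLp 2 E × PiLp 2 E), IsCoupling γ μ π₀ →
      couplingCost pw γ = v := by
    intro γ hγco
    obtain ⟨hγprob, hγfst, hγsnd⟩ := hγco
    rw [hv]
    have hae : ∀ᵐ z ∂γ, z.2 = c := by
      rw [ae_iff]
      have : {z : PiLp 2 E × PiLp 2 E | ¬ z.2 = c} = Prod.snd ⁻¹' ({c}ᶜ) := rfl
      rw [this, ← Measure.map_apply measurable_snd (measurableSet_singleton c).compl,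
        hγsnd, hπ₀]
      simp
    have heq : ∀ᵐ z ∂γ, wNormSq pw (z.1 - z.2) = wNormSq pw (z.1 - c) := by
      filter_upwards [hae] with z hz
      rw [hz]
    rw [couplingCost, integral_congr_ae heq, ← hγfst,
      integral_map measurable_fst.aemeasurable]
    · rw [hγfst]
      exact ((continuous_wNormSq pw).measurable.comp
        (measurable_id.sub measurable_const)).aestronglyMeasurable
  -- the product coupling
  set γc : Measure (PiLp 2 E × PiLp 2 E) := μ.prod π₀ with hγc
  have hγccoup : IsCoupling γc μ π₀ := by
    refine ⟨by rw [hγc]; infer_instance, ?_, ?_⟩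
    · rw [hγc, Measure.map_fst_prod]
      simp
    · rw [hγc, Measure.map_snd_prod]
      simp
  have hW2v : W2 pw μ π₀ = v := by
    have hsub : {r | ∃ γ, IsCoupling γ μ π₀ ∧ r = couplingCost pw γ} = {v} := by
      apply Set.eq_singleton_iff_unique_mem.2
      refine ⟨⟨γc, hγccoup, (hcostall γc hγccoup).symm⟩, ?_⟩
      rintro r ⟨γ, hγ, rfl⟩
      exact hcostall γ hγ
    rw [W2, hsub, csInf_singleton]
  have hγcopt : IsOptimalCoupling pw γc μ π₀ :=
    ⟨hγccoup, by rw [hW2v]; exact hcostall γc hγccoup⟩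
  -- Psi set is {R}
  set R : ℝ := Real.sqrt (∫ x, G x ∂μ) with hR
  have hPsiSet : {r | ∃ π γ, markovOp η T π = π ∧ MemP2 Set.univ π ∧
      IsOptimalCoupling pw γ μ π ∧ r = Real.sqrt (∫ z, discrep pw η T z ∂γ)} = {R} := by
    apply Set.eq_singleton_iff_unique_mem.2
    constructor
    · refine ⟨π₀, γc, hπ₀inv, hπ₀P2, hγcopt, ?_⟩
      rw [hR, hdisc π₀ hπ₀C γc hγccoup]
    · rintro r ⟨π, γ, hπinv, hπP2, ⟨hγcoup, -⟩, rfl⟩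
      rw [hdisc π (hsupp π hπinv hπP2) γ hγcoup]
  have hPsiR : Psi pw η T Set.univ μ = R := by
    rw [Psi, hPsiSet, csInf_singleton]
  refine ⟨hPsiR, ?_⟩
  rw [hPsiR, hR]
  rw [Real.le_sqrt hW2nn hGint_nn]
  exact part1
end
end

section
/- For j = 1,…,m, let G_j ⊆ E_j, let A_j be a set-valued operator from E_j to subsets of E_j, let t_j > 0 and τ_j ≥ 0, and assume: for all u_j, v_j ∈ G_j and all z_j ∈ t_j·A_j(u_j), w_j ∈ t_j·A_j(v_j), ⟨z_j − w_j, u_j − v_j⟩ ≥ −(τ_j/2)‖(u_j + z_j) − (v_j + w_j)‖². Set τ := max_j τ_j and G := ∏_j G_j. Then the resolvent of the scaled product operator is a$\alpha$-fne on G with constant 1/2 and violation τ; explicitly: for all x, y ∈ E and all u, v ∈ G such that x_j − u_j ∈ t_j·A_j(u_j) and y_j − v_j ∈ t_j·A_j(v_j) for every j, one has ‖u − v‖² ≤ (1 + τ)‖x − y‖² − ‖(x − u) − (y − v)‖². -/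
open Finset
open scoped RealInnerProductSpace

noncomputable section

variable {m : ℕ} {I : Type*} [Fintype I]
variable {E : Fin m → Type*} [∀ j, NormedAddCommGroup (E j)]
  [∀ j, InnerProductSpace ℝ (E j)] [∀ j, FiniteDimensional ℝ (E j)]

omit [∀ j, FiniteDimensional ℝ (E j)] in
lemma piLp_normSq (f : PiLp 2 E) : ‖f‖ ^ 2 = ∑ j, ‖f j‖ ^ 2 := by
  rw [← real_inner_self_eq_norm_sq, PiLp.inner_apply]
  exact Finset.sum_congr rfl fun j _ => real_inner_self_eq_norm_sq (f j)

/-- the resolvent of a blockwise submonotone (prox-regular type) family of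
set-valued operators is aα-fne with constant `1/2` and violation `τ = maxⱼ τⱼ` on `G = ∏ⱼ Gⱼ`. -/
theorem statement16
    (Gset : ∀ j, Set (E j))
    (A : ∀ j, E j → Set (E j))
    (t : Fin m → ℝ) (ht : ∀ j, 0 < t j)
    (τj : Fin m → ℝ) (hτj : ∀ j, 0 ≤ τj j)
    (hsubmono : ∀ j, ∀ u ∈ Gset j, ∀ v ∈ Gset j, ∀ z w : E j,
      (∃ a ∈ A j u, z = t j • a) → (∃ b ∈ A j v, w = t j • b) →
        -(τj j / 2) * ‖(u + z) - (v + w)‖ ^ 2 ≤ ⟪z - w, u - v⟫)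
    (τ : ℝ) (hτ : IsGreatest (Set.range τj) τ) :
    ∀ x y : PiLp 2 E, ∀ u v : PiLp 2 E,
      (∀ j, u j ∈ Gset j) → (∀ j, v j ∈ Gset j) →
      (∀ j, ∃ a ∈ A j (u j), x j - u j = t j • a) →
      (∀ j, ∃ b ∈ A j (v j), y j - v j = t j • b) →
        ‖u - v‖ ^ 2 ≤ (1 + τ) * ‖x - y‖ ^ 2 - ‖(x - u) - (y - v)‖ ^ 2 := by
  intro x y u v hu hv hx hy
  have key : ∀ j, ‖u j - v j‖ ^ 2 ≤
      (1 + τ) * ‖x j - y j‖ ^ 2 - ‖(x j - u j) - (y j - v j)‖ ^ 2 := by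
    intro j
    have hτle : τj j ≤ τ := hτ.2 ⟨j, rfl⟩
    have hsub := hsubmono j (u j) (hu j) (v j) (hv j) (x j - u j) (y j - v j) (hx j) (hy j)
    have hid : x j - y j = (u j - v j) + ((x j - u j) - (y j - v j)) := by abel
    have hnorm : ‖x j - y j‖ ^ 2
        = ‖u j - v j‖ ^ 2 + 2 * ⟪(x j - u j) - (y j - v j), u j - v j⟫
          + ‖(x j - u j) - (y j - v j)‖ ^ 2 := by
      rw [hid, ← real_inner_self_eq_norm_sq, ← real_inner_self_eq_norm_sq,
        ← real_inner_self_eq_norm_sq]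
      simp [inner_add_add_self, real_inner_comm]
      linarith [norm_add_sq_real (u j - v j) ((x j - u j) - (y j - v j))]
    have hsimp : u j + (x j - u j) - (v j + (y j - v j)) = x j - y j := by abel
    rw [hsimp] at hsub
    have hsq : 0 ≤ ‖x j - y j‖ ^ 2 := sq_nonneg _
    nlinarith [hsub, hnorm, mul_le_mul_of_nonneg_right hτle hsq]
  calc ‖u - v‖ ^ 2 = ∑ j, ‖(u - v) j‖ ^ 2 := piLp_normSq _
    _ = ∑ j, ‖u j - v j‖ ^ 2 := by simp [PiLp.sub_apply]
    _ ≤ ∑ j, ((1 + τ) * ‖x j - y j‖ ^ 2 - ‖(x j - u j) - (y j - v j)‖ ^ 2) :=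
        Finset.sum_le_sum fun j _ => key j
    _ = (1 + τ) * ‖x - y‖ ^ 2 - ‖(x - u) - (y - v)‖ ^ 2 := by
        rw [Finset.sum_sub_distrib, ← Finset.mul_sum, piLp_normSq, piLp_normSq]
        simp [PiLp.sub_apply]
end
end

section
/- Let f : E → ℝ be convex and differentiable, and assume the blockwise Lipschitz gradient condition: there are L_j > 0 with Σ_j ‖g_j(x) − g_j(y)‖² ≤ Σ_j L_j²‖x_j − y_j‖² for all x, y ∈ E, where g_j(x) ∈ E_j is the j-th block of the gradient ∇f(x); set L̄ := max_j L_j. Fix ᾱ ∈ (0,1) and a uniform step size t with 0 < t ≤ 2ᾱ/L̄, and define T_GD x := x − t∇f(x). Then T_GD is α-fne on E with constant ᾱ and no violation: for all x, y ∈ E, ‖T_GD x − T_GD y‖² ≤ ‖x − y‖² − ((1−ᾱ)/ᾱ)‖(x − T_GD x) − (y − T_GD y)‖². -/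
open Finset
open scoped RealInnerProductSpace


section Aux

variable {F : Type*} [NormedAddCommGroup F] [InnerProductSpace ℝ F] [CompleteSpace F]

lemma path_hasDerivAt (f : F → ℝ) (hf : Differentiable ℝ f) (x v : F) (s : ℝ) :
    HasDerivAt (fun s : ℝ => f (x + s • v)) ⟪gradient f (x + s • v), v⟫ s := by
  have h1 : HasDerivAt (fun s : ℝ => x + s • v) v s := by
    simpa using ((hasDerivAt_id s).smul_const v).const_add x
  have h2 := (hasGradientAt_iff_hasFDerivAt.mp (hf (x + s • v)).hasGradientAt)
  have h3 := h2.comp_hasDerivAt s h1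
  rw [InnerProductSpace.toDual_apply_apply] at h3
  exact h3

/-- First-order condition for convexity. -/
lemma convex_first_order (f : F → ℝ) (hconv : ConvexOn ℝ Set.univ f)
    (hf : Differentiable ℝ f) (y z : F) :
    f y + ⟪gradient f y, z - y⟫ ≤ f z := by
  set φ : ℝ → ℝ := fun s => f (y + s • (z - y)) with hφ
  have hφconv : ConvexOn ℝ Set.univ φ := by
    have := hconv.comp_affineMap (AffineMap.lineMap y z : ℝ →ᵃ[ℝ] F)
    have he : φ = f ∘ (AffineMap.lineMap y z : ℝ →ᵃ[ℝ] F) := by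
      funext s
      simp [φ, AffineMap.lineMap_apply, add_comm]
    rw [he]
    simpa using this
  have hd : HasDerivAt φ ⟪gradient f y, z - y⟫ 0 := by
    have := path_hasDerivAt f hf y (z - y) 0
    simpa using this
  have := hφconv.le_slope_of_hasDerivAt (Set.mem_univ (0:ℝ)) (Set.mem_univ (1:ℝ))
    one_pos hd
  have hs : slope φ 0 1 = f z - f y := by
    simp [slope_def_field, φ]
  rw [hs] at this
  linarith

/-- Descent lemma. -/
lemma descent_lemma (f : F → ℝ) (hf : Differentiable ℝ f) {L : ℝ} (hL : 0 ≤ L)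
    (hlip : ∀ a b : F, ‖gradient f a - gradient f b‖ ≤ L * ‖a - b‖) (y z : F) :
    f z ≤ f y + ⟪gradient f y, z - y⟫ + L / 2 * ‖z - y‖ ^ 2 := by
  set v := z - y with hv
  set φ' : ℝ → ℝ := fun s => ⟪gradient f (y + s • v), v⟫ with hφ'
  have hgc : Continuous (gradient f) := by
    refine (LipschitzWith.of_dist_le_mul (K := Real.toNNReal L) ?_).continuous
    intro a b
    simpa [dist_eq_norm, Real.coe_toNNReal L hL] using hlip a b
  have hφ'c : Continuous φ' := by
    apply Continuous.inner
    · exact hgc.comp (by continuity)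
    · exact continuous_const
  have hftc : ∫ s in (0:ℝ)..1, φ' s = f (y + (1:ℝ) • v) - f (y + (0:ℝ) • v) :=
    intervalIntegral.integral_eq_sub_of_hasDerivAt
      (f := fun s => f (y + s • v)) (f' := φ')
      (fun s _ => path_hasDerivAt f hf y v s) (hφ'c.intervalIntegrable 0 1)
  have hbound : ∫ s in (0:ℝ)..1, φ' s ≤
      ∫ s in (0:ℝ)..1, (⟪gradient f y, v⟫ + L * ‖v‖ ^ 2 * s) := by
    refine intervalIntegral.integral_mono_on one_pos.le (hφ'c.intervalIntegrable 0 1)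
      ((Continuous.intervalIntegrable (by continuity) 0 1)) ?_
    intro s hs
    have hsub : φ' s = ⟪gradient f y, v⟫ + ⟪gradient f (y + s • v) - gradient f y, v⟫ := by
      simp [φ', inner_sub_left]
    rw [hsub]
    have h1 : ⟪gradient f (y + s • v) - gradient f y, v⟫ ≤
        ‖gradient f (y + s • v) - gradient f y‖ * ‖v‖ := real_inner_le_norm _ _
    have h2 : ‖gradient f (y + s • v) - gradient f y‖ ≤ L * (s * ‖v‖) := by
      have := hlip (y + s • v) y
      simpa [norm_smul, abs_of_nonneg hs.1] using this
    have h3 : ‖gradient f (y + s • v) - gradient f y‖ * ‖v‖ ≤ L * (s * ‖v‖) * ‖v‖ :=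
      mul_le_mul_of_nonneg_right h2 (norm_nonneg v)
    nlinarith [norm_nonneg v]
  have hint : ∫ s in (0:ℝ)..1, (⟪gradient f y, v⟫ + L * ‖v‖ ^ 2 * s) =
      ⟪gradient f y, v⟫ + L / 2 * ‖v‖ ^ 2 := by
    rw [intervalIntegral.integral_add (by simp) ((by continuity : Continuous fun s : ℝ =>
      L * ‖v‖ ^ 2 * s).intervalIntegrable 0 1)]
    rw [intervalIntegral.integral_const_mul, integral_id]
    simp; ring
  have : f z - f y ≤ ⟪gradient f y, v⟫ + L / 2 * ‖v‖ ^ 2 := by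
    have := hbound
    rw [hftc, hint] at this
    simpa [hv] using this
  linarith

/-- Cocoercivity (Baillon–Haddad). -/
lemma cocoercive (f : F → ℝ) (hconv : ConvexOn ℝ Set.univ f) (hf : Differentiable ℝ f)
    {L : ℝ} (hL : 0 < L)
    (hlip : ∀ a b : F, ‖gradient f a - gradient f b‖ ≤ L * ‖a - b‖) (x y : F) :
    (1 / L) * ‖gradient f x - gradient f y‖ ^ 2 ≤ ⟪gradient f x - gradient f y, x - y⟫ := by
  have key : ∀ a b : F,
      f b + ⟪gradient f b, a - b⟫ + 1 / (2 * L) * ‖gradient f a - gradient f b‖ ^ 2 ≤ f a := by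
    intro a b
    set g := gradient f a - gradient f b with hg
    set c := a - L⁻¹ • g with hc
    have h1 := convex_first_order f hconv hf b c
    have h2 := descent_lemma f hf hL.le hlip a c
    have e1 : c - a = -(L⁻¹ • g) := by rw [hc]; abel
    have e2 : c - b = (a - b) - L⁻¹ • g := by rw [hc]; abel
    have e3 : ‖c - a‖ ^ 2 = L⁻¹ ^ 2 * ‖g‖ ^ 2 := by
      rw [e1, norm_neg, norm_smul]
      rw [mul_pow, Real.norm_eq_abs, sq_abs]
    have e4 : ⟪gradient f a, c - a⟫ = -(L⁻¹ * ⟪gradient f a, g⟫) := by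
      rw [e1, inner_neg_right, real_inner_smul_right]
    have e5 : ⟪gradient f b, c - b⟫ = ⟪gradient f b, a - b⟫ - L⁻¹ * ⟪gradient f b, g⟫ := by
      rw [e2, inner_sub_right, real_inner_smul_right]
    rw [e5] at h1
    rw [e4, e3] at h2
    have e6 : ⟪gradient f a, g⟫ - ⟪gradient f b, g⟫ = ‖g‖ ^ 2 := by
      rw [← inner_sub_left, hg, real_inner_self_eq_norm_sq]
    have hL' : L⁻¹ > 0 := inv_pos.mpr hL
    have : 1 / (2 * L) = L⁻¹ - L / 2 * L⁻¹ ^ 2 := by field_simp; ring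
    nlinarith [h1, h2]
  have k1 := key x y
  have k2 := key y x
  have e7 : gradient f y - gradient f x = -(gradient f x - gradient f y) := by abel
  rw [e7, norm_neg] at k2
  have e8 : ⟪gradient f x, y - x⟫ = -⟪gradient f x, x - y⟫ := by
    rw [← inner_neg_right]; congr 1; abel
  rw [e8] at k2
  have e9 : ⟪gradient f x - gradient f y, x - y⟫ =
      ⟪gradient f x, x - y⟫ - ⟪gradient f y, x - y⟫ := inner_sub_left _ _ _
  rw [e9]
  have : 1 / (2 * L) * ‖gradient f x - gradient f y‖ ^ 2 +
      1 / (2 * L) * ‖gradient f x - gradient f y‖ ^ 2 =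
      1 / L * ‖gradient f x - gradient f y‖ ^ 2 := by field_simp; ring
  linarith

end Aux

noncomputable section

variable {m : ℕ} {I : Type*} [Fintype I]
variable {E : Fin m → Type*} [∀ j, NormedAddCommGroup (E j)]
  [∀ j, InnerProductSpace ℝ (E j)] [∀ j, FiniteDimensional ℝ (E j)]

/-- for a convex differentiable function with blockwise Lipschitz gradient, the
gradient descent map with uniform step `0 < t ≤ 2ᾱ/L̄` is α-fne on `E` with constant `ᾱ` and no
violation. -/
theorem statement18
    (f : PiLp 2 E → ℝ) (hconv : ConvexOn ℝ Set.univ f) (hf : Differentiable ℝ f)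
    (L : Fin m → ℝ) (hL : ∀ j, 0 < L j)
    (hLip : ∀ x y : PiLp 2 E,
      ∑ j, ‖gradient f x j - gradient f y j‖ ^ 2 ≤ ∑ j, (L j) ^ 2 * ‖x j - y j‖ ^ 2)
    (Lbar : ℝ) (hLbar : IsGreatest (Set.range L) Lbar)
    (α : ℝ) (hα : α ∈ Set.Ioo (0 : ℝ) 1)
    (t : ℝ) (ht : 0 < t) (ht' : t ≤ 2 * α / Lbar)
    (T : PiLp 2 E → PiLp 2 E)
    (hT : ∀ x : PiLp 2 E, T x = x - t • gradient f x) :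
    ∀ x y : PiLp 2 E,
      ‖T x - T y‖ ^ 2
        ≤ ‖x - y‖ ^ 2 - ((1 - α) / α) * ‖(x - T x) - (y - T y)‖ ^ 2 := by
  intro x y
  have hLbar0 : 0 < Lbar := by
    obtain ⟨j, hj⟩ := hLbar.1
    rw [← hj]; exact hL j
  have hlip' : ∀ a b : PiLp 2 E, ‖gradient f a - gradient f b‖ ≤ Lbar * ‖a - b‖ := by
    intro a b
    have h1 : ‖gradient f a - gradient f b‖ ^ 2 ≤ (Lbar * ‖a - b‖) ^ 2 := by
      rw [mul_pow, PiLp.norm_sq_eq_of_L2, PiLp.norm_sq_eq_of_L2]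
      calc ∑ j, ‖(gradient f a - gradient f b) j‖ ^ 2
          = ∑ j, ‖gradient f a j - gradient f b j‖ ^ 2 := by simp [PiLp.sub_apply]
        _ ≤ ∑ j, (L j) ^ 2 * ‖a j - b j‖ ^ 2 := hLip a b
        _ ≤ ∑ j, Lbar ^ 2 * ‖a j - b j‖ ^ 2 := by
            refine Finset.sum_le_sum fun j _ => ?_
            exact mul_le_mul_of_nonneg_right
              (pow_le_pow_left₀ (hL j).le (hLbar.2 ⟨j, rfl⟩) 2) (sq_nonneg _)
        _ = Lbar ^ 2 * ∑ j, ‖a j - b j‖ ^ 2 := (Finset.mul_sum _ _ _).symm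
    exact (pow_le_pow_iff_left₀ (norm_nonneg _) (by positivity) two_ne_zero).mp h1
  have coco := cocoercive f hconv hf hLbar0 hlip' x y
  set g : PiLp 2 E := gradient f x - gradient f y with hg
  have coco' : (1 / Lbar) * ‖g‖ ^ 2 ≤ ⟪x - y, g⟫ := by
    rw [real_inner_comm]; exact coco
  have hTxy : T x - T y = (x - y) - t • g := by
    rw [hT x, hT y, hg, smul_sub]; abel
  have hres : (x - T x) - (y - T y) = t • g := by
    rw [hT x, hT y, hg, smul_sub]; abel
  rw [hTxy, hres]
  rw [norm_sub_sq_real, real_inner_smul_right, norm_smul, Real.norm_eq_abs,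
    abs_of_pos ht, mul_pow]
  have htL : t * Lbar ≤ 2 * α := by
    rw [le_div_iff₀ hLbar0] at ht'
    exact ht'
  have h1 : t * ((1 / Lbar) * ‖g‖ ^ 2) ≤ t * ⟪x - y, g⟫ :=
    mul_le_mul_of_nonneg_left coco' ht.le
  have h2 : 0 ≤ t * (2 * α - t * Lbar) * ‖g‖ ^ 2 :=
    mul_nonneg (mul_nonneg ht.le (sub_nonneg.mpr htL)) (sq_nonneg _)
  have hα0 := hα.1
  have hα1 := hα.2
  have h1' : t * ‖g‖ ^ 2 ≤ Lbar * (t * ⟪x - y, g⟫) := by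
    have h1'' := mul_le_mul_of_nonneg_left h1 hLbar0.le
    calc t * ‖g‖ ^ 2 = Lbar * (t * (1 / Lbar * ‖g‖ ^ 2)) := by field_simp
      _ ≤ _ := h1''
  have h3 : 2 * α * (t * ‖g‖ ^ 2) ≤ 2 * α * (Lbar * (t * ⟪x - y, g⟫)) :=
    mul_le_mul_of_nonneg_left h1' (by positivity)
  have hkey : (1 / α) * (t ^ 2 * ‖g‖ ^ 2) ≤ 2 * (t * ⟪x - y, g⟫) := by
    rw [div_mul_eq_mul_div, div_le_iff₀ hα0]
    have h5 : Lbar * (1 * (t ^ 2 * ‖g‖ ^ 2)) ≤ Lbar * (2 * (t * ⟪x - y, g⟫) * α) := by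
      nlinarith [h3, h2]
    exact le_of_mul_le_mul_left h5 hLbar0
  have hsplit : (1 - α) / α * (t ^ 2 * ‖g‖ ^ 2)
      = (1 / α) * (t ^ 2 * ‖g‖ ^ 2) - t ^ 2 * ‖g‖ ^ 2 := by
    field_simp
  nlinarith [hkey]
end
end
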